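/- Let F be an algebraically closed field of characteristic ≠ 2 and A a finite-dimensional F-algebra. If x ∈ A is conjugate to −x (i.e., there is an invertible y with y x y⁻¹ = −x), then x is the sum of two square-zero elements of A. -/

import Mathlib

open Polynomial

/-- Newton iteration: in a commutative ring where 2 is a unit, if `a` is a unit and
`s^2 - a` is nilpotent, then `a` has a square root. -/
private lemma newton_aux {R : Type*} [CommRing R] (h2 : IsUnit (2 : R)) :
    ∀ k : ℕ, ∀ a s : R, IsUnit a → (s ^ 2 - a) ^ k = 0 → ∃ r : R, r * r = a := by
  intro k
  induction k using Nat.strong_induction_on with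
  | _ k ih =>
    intro a s ha hk
    rcases Nat.eq_zero_or_pos k with rfl | hkpos
    · have h1 : (1 : R) = 0 := by simpa using hk
      refine ⟨0, ?_⟩
      have haz : a = 0 := by
        calc a = a * 1 := (mul_one a).symm
        _ = a * 0 := by rw [h1]
        _ = 0 := mul_zero a
      rw [haz, mul_zero]
    · have hen : IsNilpotent (s ^ 2 - a) := ⟨k, hk⟩
      have hs2 : IsUnit (s ^ 2) := by
        have h' : s ^ 2 = (s ^ 2 - a) + a := by ring
        rw [h']
        exact hen.isUnit_add_right_of_commute ha (Commute.all _ _)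
      have hs : IsUnit s := (isUnit_pow_iff (by norm_num : (2:ℕ) ≠ 0)).mp hs2
      by_cases hk1 : k = 1
      · refine ⟨s, ?_⟩
        have : s ^ 2 - a = 0 := by rw [hk1, pow_one] at hk; exact hk
        have := sub_eq_zero.mp this
        rw [← sq]; exact this
      · set si : R := ↑hs.unit⁻¹ with hsidef
        set ti : R := ↑h2.unit⁻¹ with htidef
        have hsi : s * si = 1 := hs.mul_val_inv
        have hti : (2 : R) * ti = 1 := h2.mul_val_inv
        set s' : R := s - (s ^ 2 - a) * si * ti with hs'def
        have key : s' ^ 2 - a = (s ^ 2 - a) ^ 2 * (si ^ 2 * ti ^ 2) := by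
          rw [hs'def]
          linear_combination (-(2*(s^2-a)*ti)) * hsi + (-(s^2-a)) * hti
        set k' : ℕ := (k + 1) / 2 with hk'def
        have hk'lt : k' < k := by omega
        have h2k' : k ≤ 2 * k' := by omega
        have hzero : (s' ^ 2 - a) ^ k' = 0 := by
          rw [key, mul_pow, ← pow_mul]
          have he : (s ^ 2 - a) ^ (2 * k') = 0 := by
            rw [show 2 * k' = k + (2 * k' - k) by omega, pow_add, hk, zero_mul]
          rw [he, zero_mul]
        exact ih k' hk'lt a s' ha hzero

private lemma newton_sqrt {R : Type*} [CommRing R] (h2 : IsUnit (2 : R)) {a s : R}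
    (ha : IsUnit a) (h : IsNilpotent (s ^ 2 - a)) : ∃ r : R, r * r = a := by
  obtain ⟨k, hk⟩ := h
  exact newton_aux h2 k a s ha hk

/-- In a finite-dimensional commutative algebra over an algebraically closed field,
every element has a square root modulo nilpotents. -/
private lemma exists_sq_sub_nilpotent {F : Type*} [Field F] [IsAlgClosed F] {R : Type*}
    [CommRing R] [Algebra F R] [FiniteDimensional F R] (v : R) :
    ∃ s : R, IsNilpotent (s ^ 2 - v) := by
  classical
  have hv : IsIntegral F v := IsIntegral.of_finite F v
  set m : F[X] := minpoly F v with hm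
  have hmne : m ≠ 0 := minpoly.ne_zero hv
  -- square roots in F
  have hsqrt : ∀ l : F, ∃ z : F, z ^ 2 = l := fun l =>
    IsAlgClosed.exists_pow_nat_eq l (by norm_num)
  choose g hg using hsqrt
  set T : Finset F := m.roots.toFinset with hT
  set s0 : F[X] := Lagrange.interpolate T id g with hs0
  set p : F[X] := s0 ^ 2 - X with hp
  have hroot : ∀ l ∈ T, (X - C l) ∣ p := by
    intro l hl
    rw [dvd_iff_isRoot]
    have he : eval l s0 = g l := Lagrange.eval_interpolate_at_node g (Set.injOn_id _) hl
    simp [hp, IsRoot, he, hg l]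
  set n : ℕ := m.natDegree with hn
  have hdvd : m ∣ p ^ n := by
    have hsplit : m = (m.roots.map fun a => X - C a).prod := by
      conv_lhs => rw [hm]
      rw [hm]
      exact (IsAlgClosed.splits _).eq_prod_roots_of_monic (minpoly.monic hv)
    rw [hsplit, Finset.prod_multiset_map_count]
    refine Finset.prod_dvd_of_coprime ?_ ?_
    · intro a ha b hb hab
      exact ((Polynomial.pairwise_coprime_X_sub_C Function.injective_id hab).pow :)
    · intro l hl
      have h1 : (X - C l) ^ m.roots.count l ∣ p ^ m.roots.count l :=
        pow_dvd_pow_of_dvd (hroot l hl) _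
      have h2 : m.roots.count l ≤ n := le_trans (Multiset.count_le_card _ _) m.card_roots'
      exact h1.trans (pow_dvd_pow p h2)
  refine ⟨Polynomial.aeval v s0, ⟨n, ?_⟩⟩
  have hav : (Polynomial.aeval v s0) ^ 2 - v = Polynomial.aeval v p := by
    simp [hp, map_sub, map_pow]
  rw [hav, ← map_pow]
  obtain ⟨c, hc⟩ := hdvd
  rw [hc, map_mul, minpoly.aeval, zero_mul]

theorem sum_two_square_zero_of_conj_neg {F : Type*} [Field F] [IsAlgClosed F]
    (h2 : (2 : F) ≠ 0) {A : Type*} [Ring A] [Algebra F A] [FiniteDimensional F A]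
    (x : A) (h : ∃ y : Aˣ, (y : A) * x * (↑y⁻¹ : A) = -x) :
    ∃ a b : A, a ^ 2 = 0 ∧ b ^ 2 = 0 ∧ x = a + b := by
  rcases subsingleton_or_nontrivial A with hA | hA
  · exact ⟨0, 0, Subsingleton.elim _ _, Subsingleton.elim _ _, Subsingleton.elim _ _⟩
  obtain ⟨y, hy⟩ := h
  -- y anticommutes with x
  have hux : (y : A) * x = -(x * (y : A)) := by
    have h' := congrArg (· * (y : A)) hy
    simpa [mul_assoc, Units.inv_mul, neg_mul] using h'
  set V : Aˣ := y * y with hV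
  have hVval : (V : A) = (y : A) * (y : A) := rfl
  -- V commutes with x
  have hVx : (V : A) * x = x * (V : A) := by
    rw [hVval, mul_assoc, hux, mul_neg, ← mul_assoc, hux, neg_mul, neg_neg, mul_assoc]
  set B : Subalgebra F A := Algebra.adjoin F {(V : A)} with hB
  have hVmem : (V : A) ∈ B := Algebra.self_mem_adjoin_singleton F _
  set vB : B := ⟨(V : A), hVmem⟩ with hvB
  -- vB is a unit of B
  have hint : IsIntegral F ((V : A)) := IsIntegral.of_finite F _
  set mp : F[X] := minpoly F ((V : A)) with hmp
  have hmpne : mp ≠ 0 := minpoly.ne_zero hint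
  have hc0 : mp.coeff 0 ≠ 0 := by
    intro h0
    have hXdvd : X ∣ mp := X_dvd_iff.mpr h0
    obtain ⟨q, hq⟩ := hXdvd
    have hqne : q ≠ 0 := by rintro rfl; rw [mul_zero] at hq; exact hmpne hq
    have haev : Polynomial.aeval ((V : A)) mp = 0 := minpoly.aeval F _
    rw [hq, map_mul, aeval_X] at haev
    have hq0 : Polynomial.aeval ((V : A)) q = 0 := by
      have h' := congrArg (fun t => ((↑V⁻¹ : A)) * t) haev
      simpa [← mul_assoc, Units.inv_mul] using h'
    have hdvd : mp ∣ q := minpoly.dvd F _ hq0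
    have hle : mp.natDegree ≤ q.natDegree := Polynomial.natDegree_le_of_dvd hdvd hqne
    have heq : mp.natDegree = q.natDegree + 1 := by
      rw [hq, natDegree_mul X_ne_zero hqne, natDegree_X, add_comm]
    omega
  -- construct the inverse of V inside B
  have hXdiv : X * mp.divX + C (mp.coeff 0) = mp := X_mul_divX_add mp
  have haev : Polynomial.aeval ((V : A)) mp = 0 := minpoly.aeval F _
  have hvd : (V : A) * Polynomial.aeval ((V : A)) mp.divX
      = -(algebraMap F A (mp.coeff 0)) := by
    have h' := congrArg (Polynomial.aeval ((V : A))) hXdiv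
    rw [map_add, map_mul, aeval_X, aeval_C, haev] at h'
    exact eq_neg_of_add_eq_zero_left h'
  set winA : A := algebraMap F A ((mp.coeff 0)⁻¹) * (-(Polynomial.aeval ((V : A)) mp.divX))
    with hwinA
  have hvw : (V : A) * winA = 1 := by
    rw [hwinA, ← mul_assoc, ← Algebra.commutes, mul_assoc, mul_neg, hvd, neg_neg,
      Algebra.commutes, ← map_mul, mul_inv_cancel₀ hc0]
    exact map_one _
  have hwmem : winA ∈ B := by
    rw [hwinA]
    exact mul_mem (B.algebraMap_mem _) (neg_mem (Polynomial.aeval_mem_adjoin_singleton F _))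
  have hvBunit : IsUnit vB := by
    refine IsUnit.of_mul_eq_one (a := vB) ⟨winA, hwmem⟩ (Subtype.ext ?_)
    simpa using hvw
  have h2B : IsUnit (2 : B) := by
    have h' := (isUnit_iff_ne_zero.mpr h2).map (algebraMap F B)
    rwa [map_ofNat] at h'
  obtain ⟨s, hsnil⟩ := exists_sq_sub_nilpotent (F := F) vB
  obtain ⟨r, hr⟩ := newton_sqrt h2B hvBunit hsnil
  set pA : A := (r : A) with hpA
  have hppV : pA * pA = (V : A) := by
    have h' := congrArg (Subtype.val) hr
    simpa using h'
  have hpB : pA ∈ B := r.2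
  -- everything in B commutes with x and y
  have hle : B ≤ Subalgebra.centralizer F {x, (y : A)} := by
    rw [hB]
    apply Algebra.adjoin_le
    intro a ha
    rw [Set.mem_singleton_iff] at ha
    subst ha
    rw [SetLike.mem_coe, Subalgebra.mem_centralizer_iff]
    rintro g (rfl | rfl)
    · exact hVx.symm
    · simp [hVval, mul_assoc]
  have hpcen := hle hpB
  rw [Subalgebra.mem_centralizer_iff] at hpcen
  have hxp : x * pA = pA * x := hpcen x (by simp)
  have hyp : (y : A) * pA = pA * (y : A) := hpcen _ (by simp)
  have hCpx : Commute pA x := hxp.symm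
  have hCpy : Commute pA (y : A) := hyp.symm
  have hCpV : Commute pA (V : A) := hVval ▸ (hCpy.mul_right hCpy)
  have hCpVinv : Commute pA ((↑V⁻¹ : A)) := hCpV.units_inv_right
  have hCVx : Commute ((V : A)) x := hVx
  have hCVinvx : Commute ((↑V⁻¹ : A)) x := hCVx.units_inv_left
  have hCVy : Commute (V : A) (y : A) := hVval ▸ ((Commute.refl (y:A)).mul_left (Commute.refl _))
  have hCVinvy : Commute ((↑V⁻¹ : A)) (y : A) := hCVy.units_inv_left
  set q : A := pA * (↑V⁻¹ : A) with hq
  have hCqx : Commute q x := hCpx.mul_left hCVinvx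
  have hCqy : Commute q (y : A) := hCpy.mul_left hCVinvy
  have hqq : q * q = (↑V⁻¹ : A) := by
    calc q * q = (pA * pA) * ((↑V⁻¹ : A) * (↑V⁻¹ : A)) :=
          hCpVinv.symm.mul_mul_mul_comm pA (↑V⁻¹ : A)
    _ = ((V : A) * (↑V⁻¹ : A)) * (↑V⁻¹ : A) := by rw [hppV, mul_assoc]
    _ = (↑V⁻¹ : A) := by rw [Units.mul_inv, one_mul]
  set ε : A := (y : A) * q with hε
  have hε2 : ε * ε = 1 := by
    calc ε * ε = ((y : A) * (y : A)) * (q * q) := hCqy.mul_mul_mul_comm (y : A) q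
    _ = (V : A) * (↑V⁻¹ : A) := by rw [hqq, ← hVval]
    _ = 1 := Units.mul_inv V
  have hεx : ε * x = -(x * ε) := by
    calc ε * x = (y : A) * (q * x) := mul_assoc _ _ _
    _ = (y : A) * (x * q) := by rw [hCqx.eq]
    _ = ((y : A) * x) * q := (mul_assoc _ _ _).symm
    _ = (-(x * (y : A))) * q := by rw [hux]
    _ = -(x * ((y : A) * q)) := by rw [neg_mul, mul_assoc]
    _ = -(x * ε) := rfl
  have hxε : x * ε = -(ε * x) := by rw [hεx, neg_neg]
  set c : A := ε * x with hc
  have h1 : x * c = -(ε * (x * x)) := by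
    calc x * c = (x * ε) * x := (mul_assoc _ _ _).symm
    _ = (-(ε * x)) * x := by rw [hxε]
    _ = -(ε * (x * x)) := by rw [neg_mul, mul_assoc]
  have hh2 : c * x = ε * (x * x) := mul_assoc _ _ _
  have h3 : c * c = -(x * x) := by
    calc c * c = ε * (x * c) := mul_assoc _ _ _
    _ = ε * (-(ε * (x * x))) := by rw [h1]
    _ = -((ε * ε) * (x * x)) := by rw [mul_neg, ← mul_assoc]
    _ = -(x * x) := by rw [hε2, one_mul]
  have hplus : (x + c) * (x + c) = 0 := by
    rw [add_mul, mul_add, mul_add, h1, hh2, h3]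
    abel
  have hminus : (x - c) * (x - c) = 0 := by
    rw [sub_mul, mul_sub, mul_sub, h1, hh2, h3]
    abel
  refine ⟨(2 : F)⁻¹ • (x + c), (2 : F)⁻¹ • (x - c), ?_, ?_, ?_⟩
  · rw [_root_.smul_pow, pow_two (x + c), hplus, smul_zero]
  · rw [_root_.smul_pow, pow_two (x - c), hminus, smul_zero]
  · rw [← smul_add]
    have hsum : (x + c) + (x - c) = (2 : F) • x := by
      rw [two_smul]; abel
    rw [hsum, smul_smul, inv_mul_cancel₀ h2, one_smul]
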